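/- Let (A, E) be a Frobenius category and let P denote its full subcategory of projective objects. Suppose F ⊆ P is a full additive subcategory satisfying: (1) every object A of A fits into a sequence A →(i_A) F_A →(p_A) P_A with F_A ∈ F, such that i_A is a left F-approximation of A, P_A ∈ P, and p_A is a pseudo-cokernel of i_A; (2) every object A of A fits into a sequence P^A →(i^A) F^A →(p^A) A with F^A ∈ F, such that p^A is a right F-approximation of A, P^A ∈ P, and i^A is a pseudo-kernel of p^A. Then the pair (A/[F], E_F) is a Frobenius category. -/

import Mathlib

universe v u

open CategoryTheory Limits

namespace Paper

variable {A : Type u} [Category.{v} A]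

section Defs
variable [Preadditive A]

/-- `i` is a kernel of `d`. -/
def IsKer {X Y Z : A} (i : X ⟶ Y) (d : Y ⟶ Z) : Prop :=
  i ≫ d = 0 ∧ ∀ ⦃W : A⦄ (g : W ⟶ Y), g ≫ d = 0 → ∃! g' : W ⟶ X, g' ≫ i = g

/-- `d` is a cokernel of `i`. -/
def IsCoker {X Y Z : A} (i : X ⟶ Y) (d : Y ⟶ Z) : Prop :=
  i ≫ d = 0 ∧ ∀ ⦃W : A⦄ (g : Y ⟶ W), i ≫ g = 0 → ∃! g' : Z ⟶ W, d ≫ g' = g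

/-- An exact structure in the sense of Quillen (following Keller's axioms) on an
additive category `A`: a class of kernel-cokernel pairs (conflations), closed under
isomorphism, satisfying the axioms (Ex0), (Ex1), (Ex1op), (Ex2), (Ex2op). -/
structure ExactStructure (A : Type u) [Category.{v} A] [Preadditive A] where
  /-- the class of conflations `X ⟶ Y ⟶ Z` -/
  IsConflation : ∀ ⦃X Y Z : A⦄, (X ⟶ Y) → (Y ⟶ Z) → Prop
  ker_of_conflation : ∀ ⦃X Y Z : A⦄ {i : X ⟶ Y} {d : Y ⟶ Z}, IsConflation i d → IsKer i d
  coker_of_conflation : ∀ ⦃X Y Z : A⦄ {i : X ⟶ Y} {d : Y ⟶ Z}, IsConflation i d → IsCoker i d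
  iso_closed : ∀ ⦃X Y Z X' Y' Z' : A⦄ {i : X ⟶ Y} {d : Y ⟶ Z} {i' : X' ⟶ Y'} {d' : Y' ⟶ Z'}
    (eX : X ≅ X') (eY : Y ≅ Y') (eZ : Z ≅ Z'),
    i ≫ eY.hom = eX.hom ≫ i' → d ≫ eZ.hom = eY.hom ≫ d' →
    IsConflation i d → IsConflation i' d'
  ex0 : ∀ ⦃Z : A⦄, IsZero Z → ∃ (X : A) (i : X ⟶ Z), IsConflation i (𝟙 Z)
  ex1 : ∀ ⦃Y Z W : A⦄ {d : Y ⟶ Z} {e : Z ⟶ W},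
    (∃ (X : A) (i : X ⟶ Y), IsConflation i d) → (∃ (X : A) (i : X ⟶ Z), IsConflation i e) →
    ∃ (X : A) (i : X ⟶ Y), IsConflation i (d ≫ e)
  ex1op : ∀ ⦃X Y W : A⦄ {i : X ⟶ Y} {j : Y ⟶ W},
    (∃ (Z : A) (d : Y ⟶ Z), IsConflation i d) → (∃ (Z : A) (d : W ⟶ Z), IsConflation j d) →
    ∃ (Z : A) (d : W ⟶ Z), IsConflation (i ≫ j) d
  ex2 : ∀ ⦃Y Z Z' : A⦄ (d : Y ⟶ Z) (f : Z' ⟶ Z),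
    (∃ (X : A) (i : X ⟶ Y), IsConflation i d) →
    ∃ (Y' : A) (d' : Y' ⟶ Z') (f' : Y' ⟶ Y),
      IsPullback d' f' f d ∧ ∃ (X : A) (i : X ⟶ Y'), IsConflation i d'
  ex2op : ∀ ⦃X Y X' : A⦄ (i : X ⟶ Y) (f : X ⟶ X'),
    (∃ (Z : A) (d : Y ⟶ Z), IsConflation i d) →
    ∃ (Y' : A) (i' : X' ⟶ Y') (f' : Y ⟶ Y'),
      IsPushout i f f' i' ∧ ∃ (Z : A) (d : Y' ⟶ Z), IsConflation i' d

namespace ExactStructure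

variable (E : ExactStructure A)

/-- `d` is a deflation. -/
def IsDeflation {Y Z : A} (d : Y ⟶ Z) : Prop :=
  ∃ (X : A) (i : X ⟶ Y), E.IsConflation i d

/-- `i` is an inflation. -/
def IsInflation {X Y : A} (i : X ⟶ Y) : Prop :=
  ∃ (Z : A) (d : Y ⟶ Z), E.IsConflation i d

/-- projective object: every deflation onto it splits. -/
def Proj (P : A) : Prop :=
  ∀ ⦃Y : A⦄ (d : Y ⟶ P), E.IsDeflation d → ∃ s : P ⟶ Y, s ≫ d = 𝟙 P

/-- injective object: every inflation out of it splits. -/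
def Inj (I : A) : Prop :=
  ∀ ⦃Y : A⦄ (i : I ⟶ Y), E.IsInflation i → ∃ r : Y ⟶ I, i ≫ r = 𝟙 I

/-- enough projective objects -/
def EnoughProj : Prop :=
  ∀ X : A, ∃ (P : A) (d : P ⟶ X), E.Proj P ∧ E.IsDeflation d

/-- enough injective objects -/
def EnoughInj : Prop :=
  ∀ X : A, ∃ (I : A) (i : X ⟶ I), E.Inj I ∧ E.IsInflation i

/-- A Frobenius category: enough projectives, enough injectives, and the two classes coincide. -/
structure IsFrobenius : Prop where
  enoughProj : E.EnoughProj
  enoughInj : E.EnoughInj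
  proj_iff_inj : ∀ P : A, E.Proj P ↔ E.Inj P

end ExactStructure

end Defs

end Paper
namespace Paper

variable {A : Type u} [Category.{v} A] [Preadditive A]

/-- `f` factors through an object of `F`. -/
def FactorsThru (F : Set A) {X Y : A} (f : X ⟶ Y) : Prop :=
  ∃ Z ∈ F, ∃ (g : X ⟶ Z) (h : Z ⟶ Y), g ≫ h = f

/-- The ideal `[F](X, Y)` of morphisms factoring through objects of `F`
(as an additive subgroup, taking the subgroup generated by such morphisms;
for an additive subcategory `F` this is exactly the set of such morphisms). -/
def fIdeal (F : Set A) (X Y : A) : AddSubgroup (X ⟶ Y) :=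
  AddSubgroup.closure {f | FactorsThru F f}

lemma fIdeal_comp_right (F : Set A) {X Y W : A} {f : X ⟶ Y} (hf : f ∈ fIdeal F X Y)
    (v : Y ⟶ W) : f ≫ v ∈ fIdeal F X W := by
  have : f ≫ v = ((Preadditive.rightComp X v : (X ⟶ Y) →+ (X ⟶ W)) f) := rfl
  rw [this]
  have hmap : (fIdeal F X Y).map (Preadditive.rightComp X v) ≤ fIdeal F X W := by
    rw [fIdeal, AddMonoidHom.map_closure]
    apply (AddSubgroup.closure_le _).2
    rintro x ⟨y, ⟨Z, hZ, g, h, rfl⟩, rfl⟩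
    exact AddSubgroup.subset_closure ⟨Z, hZ, g, h ≫ v,
      show g ≫ h ≫ v = (g ≫ h) ≫ v from (Category.assoc g h v).symm⟩
  exact hmap (AddSubgroup.mem_map_of_mem _ hf)

lemma fIdeal_comp_left (F : Set A) {X Y W : A} (u : W ⟶ X) {f : X ⟶ Y}
    (hf : f ∈ fIdeal F X Y) : u ≫ f ∈ fIdeal F W Y := by
  have : u ≫ f = ((Preadditive.leftComp Y u : (X ⟶ Y) →+ (W ⟶ Y)) f) := rfl
  rw [this]
  have hmap : (fIdeal F X Y).map (Preadditive.leftComp Y u) ≤ fIdeal F W Y := by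
    rw [fIdeal, AddMonoidHom.map_closure]
    apply (AddSubgroup.closure_le _).2
    rintro x ⟨y, ⟨Z, hZ, g, h, rfl⟩, rfl⟩
    exact AddSubgroup.subset_closure ⟨Z, hZ, u ≫ g, h,
      show (u ≫ g) ≫ h = u ≫ g ≫ h from Category.assoc u g h⟩
  exact hmap (AddSubgroup.mem_map_of_mem _ hf)

/-- Objects of the factor category `A/[F]`. -/
structure FObj (A : Type u) (F : Set A) : Type u where
  obj : A

/-- The factor category `A/[F]`: same objects as `A`, morphisms are
residue classes modulo the ideal `[F]`. -/
instance factorCategory (F : Set A) : Category.{v} (FObj A F) where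
  Hom X Y := (X.obj ⟶ Y.obj) ⧸ fIdeal F X.obj Y.obj
  id X := QuotientAddGroup.mk (𝟙 X.obj)
  comp {X Y Z} f g :=
    Quotient.liftOn₂ f g (fun f g => QuotientAddGroup.mk (f ≫ g))
      (by
        intro a₁ a₂ b₁ b₂ h₁ h₂
        have h₁' : -a₁ + b₁ ∈ fIdeal F X.obj Y.obj := QuotientAddGroup.eq.mp (Quotient.sound h₁)
        have h₂' : -a₂ + b₂ ∈ fIdeal F Y.obj Z.obj := QuotientAddGroup.eq.mp (Quotient.sound h₂)
        show QuotientAddGroup.mk (a₁ ≫ a₂) = QuotientAddGroup.mk (b₁ ≫ b₂)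
        refine QuotientAddGroup.eq.mpr ?_
        have heq : -(a₁ ≫ a₂) + b₁ ≫ b₂ = (-a₁ + b₁) ≫ a₂ + b₁ ≫ (-a₂ + b₂) := by
          simp only [Preadditive.add_comp, Preadditive.comp_add, Preadditive.neg_comp,
            Preadditive.comp_neg]
          abel
        rw [heq]
        exact add_mem (fIdeal_comp_right F h₁' a₂) (fIdeal_comp_left F b₁ h₂'))
  id_comp {X Y} f := by
    induction f using Quotient.inductionOn with
    | h f => exact congrArg QuotientAddGroup.mk (Category.id_comp f)
  comp_id {X Y} f := by
    induction f using Quotient.inductionOn with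
    | h f => exact congrArg QuotientAddGroup.mk (Category.comp_id f)
  assoc {W X Y Z} f g h := by
    induction f using Quotient.inductionOn with
    | h f =>
      induction g using Quotient.inductionOn with
      | h g =>
        induction h using Quotient.inductionOn with
        | h h => exact congrArg QuotientAddGroup.mk (Category.assoc f g h)

instance factorPreadditive (F : Set A) : Preadditive (FObj A F) where
  homGroup X Y := inferInstanceAs (AddCommGroup ((X.obj ⟶ Y.obj) ⧸ fIdeal F X.obj Y.obj))
  add_comp P Q R f f' g := by
    induction f using Quotient.inductionOn with
    | h f =>
      induction f' using Quotient.inductionOn with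
      | h f' =>
        induction g using Quotient.inductionOn with
        | h g =>
          show QuotientAddGroup.mk ((f + f') ≫ g) =
            QuotientAddGroup.mk (f ≫ g) + QuotientAddGroup.mk (f' ≫ g)
          rw [← QuotientAddGroup.mk_add]
          exact congrArg QuotientAddGroup.mk (Preadditive.add_comp _ _ _ f f' g)
  comp_add P Q R f g g' := by
    induction f using Quotient.inductionOn with
    | h f =>
      induction g using Quotient.inductionOn with
      | h g =>
        induction g' using Quotient.inductionOn with
        | h g' =>
          show QuotientAddGroup.mk (f ≫ (g + g')) =
            QuotientAddGroup.mk (f ≫ g) + QuotientAddGroup.mk (f ≫ g')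
          rw [← QuotientAddGroup.mk_add]
          exact congrArg QuotientAddGroup.mk (Preadditive.comp_add _ _ _ f g g')

/-- The canonical projection functor `π : A ⟶ A/[F]`. -/
def fproj (F : Set A) : A ⥤ FObj A F where
  obj X := ⟨X⟩
  map f := QuotientAddGroup.mk f
  map_id _ := rfl
  map_comp _ _ := rfl

/-- The class `E_F` of composable pairs in `A/[F]` isomorphic to the image of a
conflation of `(A, E)` under the projection functor. -/
def MemEF (E : ExactStructure A) (F : Set A) ⦃X Y Z : FObj A F⦄
    (i : X ⟶ Y) (d : Y ⟶ Z) : Prop :=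
  ∃ (X' Y' Z' : A) (i' : X' ⟶ Y') (d' : Y' ⟶ Z'), E.IsConflation i' d' ∧
    ∃ (eX : (fproj F).obj X' ≅ X) (eY : (fproj F).obj Y' ≅ Y) (eZ : (fproj F).obj Z' ≅ Z),
      (fproj F).map i' ≫ eY.hom = eX.hom ≫ i ∧ (fproj F).map d' ≫ eZ.hom = eY.hom ≫ d

section Hyp
variable [HasZeroObject A] [HasBinaryBiproducts A]

/-- The hypotheses of Theorem 3.1: `F` is a full additive subcategory of the
projective objects satisfying the approximation conditions (1) and (2). -/
structure FactorHyp (E : ExactStructure A) (F : Set A) : Prop where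
  /-- every object of `F` is projective -/
  proj : ∀ P ∈ F, E.Proj P
  /-- `F` is additive: it contains a zero object -/
  zero_mem : ∃ Z ∈ F, IsZero Z
  /-- `F` is additive: it is closed under direct sums -/
  sum_mem : ∀ X Y : A, X ∈ F → Y ∈ F → ∃ W ∈ F, Nonempty (W ≅ X ⊞ Y)
  /-- condition (1): `A ⟶ F_A ⟶ P_A` with `i_A` a left `F`-approximation and
  `p_A` a pseudo-cokernel of `i_A`, `P_A` projective -/
  cond1 : ∀ X : A, ∃ (FA PA : A) (iA : X ⟶ FA) (pA : FA ⟶ PA), FA ∈ F ∧ E.Proj PA ∧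
    (∀ F₁ ∈ F, ∀ g : X ⟶ F₁, ∃ t : FA ⟶ F₁, iA ≫ t = g) ∧
    iA ≫ pA = 0 ∧ (∀ ⦃W : A⦄ (c : FA ⟶ W), iA ≫ c = 0 → ∃ t : PA ⟶ W, pA ≫ t = c)
  /-- condition (2): `P^A ⟶ F^A ⟶ A` with `p^A` a right `F`-approximation and
  `i^A` a pseudo-kernel of `p^A`, `P^A` projective -/
  cond2 : ∀ X : A, ∃ (PA FA : A) (iA : PA ⟶ FA) (pA : FA ⟶ X), FA ∈ F ∧ E.Proj PA ∧
    (∀ F₁ ∈ F, ∀ g : F₁ ⟶ X, ∃ t : F₁ ⟶ FA, t ≫ pA = g) ∧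
    iA ≫ pA = 0 ∧ (∀ ⦃W : A⦄ (c : W ⟶ FA), c ≫ pA = 0 → ∃ t : W ⟶ PA, t ≫ iA = c)

end Hyp

end Paper
namespace Paper

open CategoryTheory Limits

section GenCat

variable {C : Type*} [Category C]

/-- Build an `IsPullback` from an existence-and-uniqueness universal property. -/
theorem mk_isPullback {P X Y Z : C} {a : P ⟶ X} {b : P ⟶ Y} {f : X ⟶ Z} {g : Y ⟶ Z}
    (comm : a ≫ f = b ≫ g)
    (hex : ∀ {W : C} (x : W ⟶ X) (y : W ⟶ Y), x ≫ f = y ≫ g → ∃ c : W ⟶ P, c ≫ a = x ∧ c ≫ b = y)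
    (huniq : ∀ {W : C} (c₁ c₂ : W ⟶ P), c₁ ≫ a = c₂ ≫ a → c₁ ≫ b = c₂ ≫ b → c₁ = c₂) :
    IsPullback a b f g := by
  refine ⟨⟨comm⟩, ⟨PullbackCone.IsLimit.mk comm (fun s => (hex s.fst s.snd s.condition).choose)
    (fun s => (hex s.fst s.snd s.condition).choose_spec.1)
    (fun s => (hex s.fst s.snd s.condition).choose_spec.2)
    (fun s m hm1 hm2 => ?_)⟩⟩
  exact huniq _ _ (hm1.trans (hex s.fst s.snd s.condition).choose_spec.1.symm)
    (hm2.trans (hex s.fst s.snd s.condition).choose_spec.2.symm)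

/-- Build an `IsPushout` from an existence-and-uniqueness universal property. -/
theorem mk_isPushout {Z X Y P : C} {f : Z ⟶ X} {g : Z ⟶ Y} {h : X ⟶ P} {i : Y ⟶ P}
    (comm : f ≫ h = g ≫ i)
    (hex : ∀ {W : C} (x : X ⟶ W) (y : Y ⟶ W), f ≫ x = g ≫ y → ∃ c : P ⟶ W, h ≫ c = x ∧ i ≫ c = y)
    (huniq : ∀ {W : C} (c₁ c₂ : P ⟶ W), h ≫ c₁ = h ≫ c₂ → i ≫ c₁ = i ≫ c₂ → c₁ = c₂) :
    IsPushout f g h i := by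
  refine ⟨⟨comm⟩, ⟨PushoutCocone.IsColimit.mk comm (fun s => (hex s.inl s.inr s.condition).choose)
    (fun s => (hex s.inl s.inr s.condition).choose_spec.1)
    (fun s => (hex s.inl s.inr s.condition).choose_spec.2)
    (fun s m hm1 hm2 => ?_)⟩⟩
  exact huniq _ _ (hm1.trans (hex s.inl s.inr s.condition).choose_spec.1.symm)
    (hm2.trans (hex s.inl s.inr s.condition).choose_spec.2.symm)

/-- In a pullback square, if the cospan leg `f` is an isomorphism then the opposite
cone leg `b` is an isomorphism. -/
theorem isPullback_isIso_snd {P X Y Z : C} {a : P ⟶ X} {b : P ⟶ Y} {f : X ⟶ Z} {g : Y ⟶ Z}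
    (h : IsPullback a b f g) (hf : IsIso f) : IsIso b := by
  have w : (g ≫ inv f) ≫ f = 𝟙 Y ≫ g := by simp
  refine ⟨h.lift (g ≫ inv f) (𝟙 Y) w, ?_, by simpa using h.lift_snd _ _ w⟩
  apply h.hom_ext
  · rw [Category.assoc, h.lift_fst, Category.id_comp]
    calc b ≫ g ≫ inv f = (b ≫ g) ≫ inv f := by rw [Category.assoc]
      _ = (a ≫ f) ≫ inv f := by rw [h.w]
      _ = a := by simp
  · rw [Category.assoc, h.lift_snd, Category.comp_id, Category.id_comp]

/-- In a pushout square, if the span leg `f` is an isomorphism then the opposite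
cocone leg `i` is an isomorphism. -/
theorem isPushout_isIso_inr {Z X Y P : C} {f : Z ⟶ X} {g : Z ⟶ Y} {h : X ⟶ P} {i : Y ⟶ P}
    (hpo : IsPushout f g h i) (hf : IsIso f) : IsIso i := by
  have w : f ≫ (inv f ≫ g) = g ≫ 𝟙 Y := by simp
  refine ⟨hpo.desc (inv f ≫ g) (𝟙 Y) w, by simpa using hpo.inr_desc _ _ w, ?_⟩
  apply hpo.hom_ext
  · rw [← Category.assoc, hpo.inl_desc, Category.comp_id]
    calc (inv f ≫ g) ≫ i = inv f ≫ (g ≫ i) := by rw [Category.assoc]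
      _ = inv f ≫ (f ≫ h) := by rw [hpo.w]
      _ = h := by simp
  · rw [← Category.assoc, hpo.inr_desc, Category.id_comp, Category.comp_id]

/-- Transform a pullback of `f` and `e ≫ d` (with `e` iso) into a pullback of `f` and `d`. -/
theorem isPullback_cancel_iso {P X Y Y' Z : C} {a : P ⟶ X} {b : P ⟶ Y} {f : X ⟶ Z}
    {e : Y ⟶ Y'} {d : Y' ⟶ Z} (h : IsPullback a b f (e ≫ d)) (he : IsIso e) :
    IsPullback a (b ≫ e) f d := by
  refine mk_isPullback (by rw [Category.assoc, ← h.w]) ?_ ?_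
  · intro W x y hxy
    have w : x ≫ f = (y ≫ inv e) ≫ e ≫ d := by
      rw [hxy]; simp
    exact ⟨h.lift x (y ≫ inv e) w, h.lift_fst _ _ w, by
      rw [← Category.assoc, h.lift_snd]; simp⟩
  · intro W c₁ c₂ h1 h2
    exact h.hom_ext h1 (by
      have := congrArg (fun t => t ≫ inv e) h2
      simpa using this)

/-- Transform a pushout of `i ≫ e` and `f` (with `e` iso) into a pushout of `i` and `f`. -/
theorem isPushout_cancel_iso {Z X X' Y P : C} {i : Z ⟶ X} {e : X ⟶ X'} {f : Z ⟶ Y}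
    {h : X' ⟶ P} {j : Y ⟶ P} (hpo : IsPushout (i ≫ e) f h j) (he : IsIso e) :
    IsPushout i f (e ≫ h) j := by
  refine mk_isPushout (by rw [← Category.assoc, ← hpo.w]) ?_ ?_
  · intro W x y hxy
    have w : (i ≫ e) ≫ (inv e ≫ x) = f ≫ y := by
      rw [← hxy]; simp
    exact ⟨hpo.desc (inv e ≫ x) y w, by
      rw [Category.assoc, hpo.inl_desc]; simp, hpo.inr_desc _ _ w⟩
  · intro W c₁ c₂ h1 h2
    refine hpo.hom_ext ?_ h2
    have := congrArg (fun t => inv e ≫ t) h1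
    simpa using this

end GenCat

end Paper
namespace Paper

open CategoryTheory Limits

section GenKer

variable {C : Type*} [Category C] [Preadditive C]

theorem IsKer.mono {X Y Z : C} {i : X ⟶ Y} {d : Y ⟶ Z} (hk : IsKer i d)
    {W : C} {a b : W ⟶ X} (h : a ≫ i = b ≫ i) : a = b := by
  have hz : ((a - b) ≫ i) ≫ d = 0 := by
    rw [Preadditive.sub_comp, h, sub_self, Limits.zero_comp]
  obtain ⟨g', hg', huniq⟩ := hk.2 ((a - b) ≫ i) hz
  have h1 : a - b = g' := huniq (a - b) rfl
  have h2 : (0 : W ⟶ X) = g' := by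
    apply huniq
    rw [Limits.zero_comp, Preadditive.sub_comp, h, sub_self]
  have : a - b = (0 : W ⟶ X) := h1.trans h2.symm
  rwa [sub_eq_zero] at this

theorem IsCoker.epi {X Y Z : C} {i : X ⟶ Y} {d : Y ⟶ Z} (hk : IsCoker i d)
    {W : C} {a b : Z ⟶ W} (h : d ≫ a = d ≫ b) : a = b := by
  have hz : i ≫ (d ≫ (a - b)) = 0 := by
    rw [Preadditive.comp_sub, h, sub_self, Limits.comp_zero]
  obtain ⟨g', hg', huniq⟩ := hk.2 (d ≫ (a - b)) hz
  have h1 : a - b = g' := huniq (a - b) rfl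
  have h2 : (0 : Z ⟶ W) = g' := by
    apply huniq
    rw [Limits.comp_zero, Preadditive.comp_sub, h, sub_self]
  have : a - b = (0 : Z ⟶ W) := h1.trans h2.symm
  rwa [sub_eq_zero] at this

/-- Transport `IsKer` along isomorphisms of the pair. -/
theorem IsKer.of_iso {X Y Z X' Y' Z' : C} {i : X ⟶ Y} {d : Y ⟶ Z} {i' : X' ⟶ Y'} {d' : Y' ⟶ Z'}
    (eX : X ≅ X') (eY : Y ≅ Y') (eZ : Z ≅ Z')
    (hi : i ≫ eY.hom = eX.hom ≫ i') (hd : d ≫ eZ.hom = eY.hom ≫ d')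
    (hk : IsKer i d) : IsKer i' d' := by
  have hi' : i' = eX.inv ≫ i ≫ eY.hom := by rw [hi]; simp
  have hd' : d' = eY.inv ≫ d ≫ eZ.hom := by rw [hd]; simp
  have h0 : ∀ {W : C} (t : Z ⟶ W), i ≫ d ≫ t = 0 := fun t => by
    rw [← Category.assoc, hk.1, Limits.zero_comp]
  constructor
  · rw [hi', hd']; simp [h0]
  · intro W g hg
    have hg2 : (g ≫ eY.inv) ≫ d = 0 := by
      rw [hd'] at hg
      have := congrArg (fun t => t ≫ eZ.inv) hg
      simpa using this
    obtain ⟨g', hg', huniq⟩ := hk.2 (g ≫ eY.inv) hg2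
    refine ⟨g' ≫ eX.hom, ?_, ?_⟩
    · rw [hi']
      have : g' ≫ i = g ≫ eY.inv := hg'
      simp only [Category.assoc, Iso.hom_inv_id_assoc]
      rw [← Category.assoc g' i, this]
      simp
    · intro y hy
      have hyi : (y ≫ eX.inv) ≫ i = g ≫ eY.inv := by
        rw [hi'] at hy
        have := congrArg (fun t => t ≫ eY.inv) hy
        simp only [Category.assoc] at this ⊢
        simpa using this
      have := huniq (y ≫ eX.inv) hyi
      have h2 := congrArg (fun t => t ≫ eX.hom) this
      simpa using h2

/-- Transport `IsCoker` along isomorphisms of the pair. -/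
theorem IsCoker.of_iso {X Y Z X' Y' Z' : C} {i : X ⟶ Y} {d : Y ⟶ Z} {i' : X' ⟶ Y'} {d' : Y' ⟶ Z'}
    (eX : X ≅ X') (eY : Y ≅ Y') (eZ : Z ≅ Z')
    (hi : i ≫ eY.hom = eX.hom ≫ i') (hd : d ≫ eZ.hom = eY.hom ≫ d')
    (hk : IsCoker i d) : IsCoker i' d' := by
  have hi' : i' = eX.inv ≫ i ≫ eY.hom := by rw [hi]; simp
  have hd' : d' = eY.inv ≫ d ≫ eZ.hom := by rw [hd]; simp
  have h0 : ∀ {W : C} (t : Z ⟶ W), i ≫ d ≫ t = 0 := fun t => by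
    rw [← Category.assoc, hk.1, Limits.zero_comp]
  constructor
  · rw [hi', hd']; simp [h0]
  · intro W g hg
    have hg2 : i ≫ (eY.hom ≫ g) = 0 := by
      rw [hi'] at hg
      have := congrArg (fun t => eX.hom ≫ t) hg
      simp only [Category.assoc] at this ⊢
      simpa using this
    obtain ⟨g', hg', huniq⟩ := hk.2 (eY.hom ≫ g) hg2
    refine ⟨eZ.inv ≫ g', ?_, ?_⟩
    · rw [hd']
      have : d ≫ g' = eY.hom ≫ g := hg'
      simp only [Category.assoc, Iso.hom_inv_id_assoc]
      rw [hg']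
      simp
    · intro y hy
      have hyi : d ≫ (eZ.hom ≫ y) = eY.hom ≫ g := by
        rw [hd'] at hy
        have := congrArg (fun t => eY.hom ≫ t) hy
        simp only [Category.assoc] at this ⊢
        simpa using this
      have := huniq (eZ.hom ≫ y) hyi
      have h2 := congrArg (fun t => eZ.inv ≫ t) this
      simpa using h2

end GenKer

end Paper
namespace Paper

open CategoryTheory Limits

section GenExact

variable {A : Type u} [Category.{v} A] [Preadditive A]
variable (E : ExactStructure A)

namespace ExactStructure

theorem infl_comp_defl_zero {X Y Z : A} {i : X ⟶ Y} {d : Y ⟶ Z}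
    (h : E.IsConflation i d) : i ≫ d = 0 :=
  (E.ker_of_conflation h).1

section WithZero

variable [HasZeroObject A]

theorem id_isDeflation (X : A) : E.IsDeflation (𝟙 X) := by
  obtain ⟨O, hO⟩ := HasZeroObject.zero (C := A)
  obtain ⟨X₀, i₀, hc₀⟩ := E.ex0 hO
  obtain ⟨Y', d', f', hpb, X₁, i₁, hc₁⟩ := E.ex2 (𝟙 O) (0 : X ⟶ O) ⟨X₀, i₀, hc₀⟩
  have hiso : IsIso d' := by
    have w : (𝟙 X) ≫ (0 : X ⟶ O) = (0 : X ⟶ O) ≫ 𝟙 O := by simp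
    refine ⟨hpb.lift (𝟙 X) 0 w, ?_, by simpa using hpb.lift_fst _ _ w⟩
    apply hpb.hom_ext
    · rw [Category.assoc, hpb.lift_fst, Category.comp_id, Category.id_comp]
    · exact hO.eq_of_tgt _ _
  refine ⟨X₁, i₁ ≫ d', E.iso_closed (Iso.refl X₁) (asIso d') (Iso.refl X) ?_ ?_ hc₁⟩
  · simp [asIso]
  · simp [asIso]

theorem id_isInflation (X : A) : E.IsInflation (𝟙 X) := by
  obtain ⟨O, hO⟩ := HasZeroObject.zero (C := A)
  obtain ⟨X₀, i₀, hc₀⟩ := E.ex0 hO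
  have hinf : E.IsInflation i₀ := ⟨O, 𝟙 O, hc₀⟩
  obtain ⟨Y', i', f', hpo, C, d₂, hc₂⟩ := E.ex2op i₀ (0 : X₀ ⟶ X) hinf
  have hiso : IsIso i' := by
    have w : i₀ ≫ (0 : O ⟶ X) = (0 : X₀ ⟶ X) ≫ 𝟙 X := by simp
    refine ⟨hpo.desc 0 (𝟙 X) w, by simpa using hpo.inr_desc _ _ w, ?_⟩
    apply hpo.hom_ext
    · exact hO.eq_of_src _ _
    · rw [← Category.assoc, hpo.inr_desc, Category.id_comp, Category.comp_id]
  refine ⟨C, i' ≫ d₂, E.iso_closed (Iso.refl X) (asIso i').symm (Iso.refl C) ?_ ?_ hc₂⟩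
  · simp [asIso]
  · simp [asIso]

theorem isDeflation_of_isIso {X Y : A} (f : X ⟶ Y) [IsIso f] : E.IsDeflation f := by
  obtain ⟨K, i₂, hc⟩ := E.id_isDeflation X
  exact ⟨K, i₂, E.iso_closed (Iso.refl K) (Iso.refl X) (asIso f) (by simp) (by simp [asIso]) hc⟩

theorem isInflation_of_isIso {X Y : A} (f : X ⟶ Y) [IsIso f] : E.IsInflation f := by
  obtain ⟨C, d₂, hc⟩ := E.id_isInflation X
  refine ⟨C, inv f ≫ d₂, E.iso_closed (Iso.refl X) (asIso f) (Iso.refl C) (by simp [asIso])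
    ?_ hc⟩
  simp [asIso]

end WithZero

theorem IsDeflation.comp {Y Z W : A} {d : Y ⟶ Z} {e : Z ⟶ W}
    (hd : E.IsDeflation d) (he : E.IsDeflation e) : E.IsDeflation (d ≫ e) :=
  E.ex1 hd he

theorem IsInflation.comp {X Y W : A} {i : X ⟶ Y} {j : Y ⟶ W}
    (hi : E.IsInflation i) (hj : E.IsInflation j) : E.IsInflation (i ≫ j) :=
  E.ex1op hi hj

/-- Projective objects lift along deflations. -/
theorem proj_lift {P Y Z : A} (hP : E.Proj P) {d : Y ⟶ Z} (hd : E.IsDeflation d)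
    (f : P ⟶ Z) : ∃ g : P ⟶ Y, g ≫ d = f := by
  obtain ⟨Y', d', f', hpb, hconf⟩ := E.ex2 d f hd
  obtain ⟨s, hs⟩ := hP d' hconf
  refine ⟨s ≫ f', ?_⟩
  rw [Category.assoc, ← hpb.w, ← Category.assoc, hs, Category.id_comp]

/-- Injective objects extend along inflations. -/
theorem inj_extend {I X Y : A} (hI : E.Inj I) {i : X ⟶ Y} (hi : E.IsInflation i)
    (f : X ⟶ I) : ∃ g : Y ⟶ I, i ≫ g = f := by
  obtain ⟨Y', i', f', hpo, hconf⟩ := E.ex2op i f hi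
  obtain ⟨r, hr⟩ := hI i' hconf
  refine ⟨f' ≫ r, ?_⟩
  rw [← Category.assoc, hpo.w, Category.assoc, hr, Category.comp_id]

/-- A retract of a projective object is projective. -/
theorem proj_of_retract {P X : A} (hP : E.Proj P) (s : X ⟶ P) (r : P ⟶ X)
    (hsr : s ≫ r = 𝟙 X) : E.Proj X := by
  intro Y d hd
  obtain ⟨g, hg⟩ := E.proj_lift hP hd r
  exact ⟨s ≫ g, by rw [Category.assoc, hg, hsr]⟩

/-- A retract of an injective object is injective. -/
theorem inj_of_retract {I X : A} (hI : E.Inj I) (s : X ⟶ I) (r : I ⟶ X)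
    (hsr : s ≫ r = 𝟙 X) : E.Inj X := by
  intro Y i hi
  obtain ⟨g, hg⟩ := E.inj_extend hI hi s
  exact ⟨g ≫ r, by rw [← Category.assoc, hg, hsr]⟩

end ExactStructure

end GenExact

end Paper
namespace Paper

open CategoryTheory Limits

section QuotBasic

variable {A : Type u} [Category.{v} A] [Preadditive A]

theorem pi_surjective (F : Set A) {X Y : A}
    (fbar : (fproj F).obj X ⟶ (fproj F).obj Y) : ∃ f : X ⟶ Y, (fproj F).map f = fbar :=
  QuotientAddGroup.induction_on fbar (fun f => ⟨f, rfl⟩)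

theorem pi_eq_iff (F : Set A) {X Y : A} (f g : X ⟶ Y) :
    (fproj F).map f = (fproj F).map g ↔ g - f ∈ fIdeal F X Y := by
  show (QuotientAddGroup.mk f : _ ⧸ fIdeal F X Y) = QuotientAddGroup.mk g ↔ _
  rw [QuotientAddGroup.eq, neg_add_eq_sub]

theorem pi_eq_zero_iff (F : Set A) {X Y : A} (f : X ⟶ Y) :
    (fproj F).map f = 0 ↔ f ∈ fIdeal F X Y := by
  show (QuotientAddGroup.mk f : _ ⧸ fIdeal F X Y) = 0 ↔ _
  exact QuotientAddGroup.eq_zero_iff f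

theorem pi_map_add (F : Set A) {X Y : A} (f g : X ⟶ Y) :
    (fproj F).map (f + g) = (fproj F).map f + (fproj F).map g := rfl

theorem pi_map_sub (F : Set A) {X Y : A} (f g : X ⟶ Y) :
    (fproj F).map (f - g) = (fproj F).map f - (fproj F).map g :=
  QuotientAddGroup.mk_sub _ _ _

theorem pi_map_zero (F : Set A) {X Y : A} :
    (fproj F).map (0 : X ⟶ Y) = 0 := rfl

variable [HasBinaryBiproducts A]

/-- Under the additivity assumptions on `F`, the ideal `[F](X,Y)` is exactly the set of
morphisms factoring through an object of `F`. -/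
theorem mem_fIdeal_iff (F : Set A) (hz : ∃ Z ∈ F, IsZero Z)
    (hs : ∀ X Y : A, X ∈ F → Y ∈ F → ∃ W ∈ F, Nonempty (W ≅ X ⊞ Y))
    {X Y : A} (f : X ⟶ Y) : f ∈ fIdeal F X Y ↔ FactorsThru F f := by
  have hsub : ∃ S : AddSubgroup (X ⟶ Y), (S : Set (X ⟶ Y)) = {f | FactorsThru F f} := by
    obtain ⟨Z₀, hZ₀, hzero⟩ := hz
    refine ⟨⟨⟨⟨{f | FactorsThru F f}, ?_⟩, ?_⟩, ?_⟩, rfl⟩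
    · rintro a b ⟨Z₁, hZ₁, g₁, h₁, hg₁⟩ ⟨Z₂, hZ₂, g₂, h₂, hg₂⟩
      obtain ⟨W, hW, ⟨e⟩⟩ := hs Z₁ Z₂ hZ₁ hZ₂
      refine ⟨W, hW, biprod.lift g₁ g₂ ≫ e.inv, e.hom ≫ biprod.desc h₁ h₂, ?_⟩
      rw [Category.assoc, Iso.inv_hom_id_assoc, biprod.lift_desc, hg₁, hg₂]
    · exact ⟨Z₀, hZ₀, 0, 0, by simp⟩
    · rintro a ⟨Z₁, hZ₁, g₁, h₁, hg₁⟩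
      exact ⟨Z₁, hZ₁, -g₁, h₁, by rw [Preadditive.neg_comp, hg₁]⟩
  obtain ⟨S, hS⟩ := hsub
  have : fIdeal F X Y = S := by
    rw [fIdeal, ← hS, AddSubgroup.closure_eq]
  rw [this]
  change f ∈ (S : Set _) ↔ _
  rw [hS]
  exact Iff.rfl

end QuotBasic

end Paper
namespace Paper

open CategoryTheory Limits

section QuotKer

variable {A : Type u} [Category.{v} A] [Preadditive A] [HasZeroObject A] [HasBinaryBiproducts A]
variable {E : ExactStructure A} {F : Set A}

/-- If `i` is an inflation and `h ≫ i ∈ [F]` then `h ∈ [F]`. -/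
theorem fIdeal_cancel_of_inflation (hF : FactorHyp E F) {X Y W : A} {i : X ⟶ Y}
    (hi : E.IsInflation i) {h : W ⟶ X} (hm : h ≫ i ∈ fIdeal F W Y) :
    h ∈ fIdeal F W X := by
  obtain ⟨Z₀, d₀, hc⟩ := hi
  obtain ⟨F₁, hF₁, a, b, hab⟩ := (mem_fIdeal_iff F hF.zero_mem hF.sum_mem _).mp hm
  obtain ⟨FW, PW, iW, pW, hFW, hPW, happrox, hzW, hpcok⟩ := hF.cond1 W
  obtain ⟨a₁, ha₁⟩ := happrox F₁ hF₁ a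
  have hid : i ≫ d₀ = 0 := E.infl_comp_defl_zero hc
  have h1 : iW ≫ a₁ ≫ b ≫ d₀ = 0 := by
    calc iW ≫ a₁ ≫ b ≫ d₀ = ((iW ≫ a₁) ≫ b) ≫ d₀ := by simp only [Category.assoc]
      _ = (h ≫ i) ≫ d₀ := by rw [ha₁, hab]
      _ = h ≫ i ≫ d₀ := by rw [Category.assoc]
      _ = 0 := by rw [hid, Limits.comp_zero]
  obtain ⟨t, ht⟩ := hpcok (a₁ ≫ b ≫ d₀) h1
  obtain ⟨t₁, ht₁⟩ := E.proj_lift hPW ⟨X, i, hc⟩ t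
  have h2 : (a₁ ≫ b - pW ≫ t₁) ≫ d₀ = 0 := by
    rw [Preadditive.sub_comp, Category.assoc pW t₁ d₀, ht₁, ht, Category.assoc, sub_self]
  obtain ⟨v, hv, -⟩ := (E.ker_of_conflation hc).2 (a₁ ≫ b - pW ≫ t₁) h2
  have h3 : h ≫ i = (iW ≫ v) ≫ i := by
    rw [Category.assoc, hv, Preadditive.comp_sub]
    rw [← Category.assoc iW pW t₁, hzW, Limits.zero_comp, sub_zero, ← Category.assoc, ha₁, hab]
  have h4 : h = iW ≫ v := (E.ker_of_conflation hc).mono h3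
  exact (mem_fIdeal_iff F hF.zero_mem hF.sum_mem _).mpr ⟨FW, hFW, iW, v, h4.symm⟩

/-- If `d` is a deflation and `d ≫ h ∈ [F]` then `h ∈ [F]`. -/
theorem fIdeal_cancel_of_deflation (hF : FactorHyp E F) (hE : E.IsFrobenius)
    {Y Z W : A} {d : Y ⟶ Z} (hd : E.IsDeflation d) {h : Z ⟶ W}
    (hm : d ≫ h ∈ fIdeal F Y W) : h ∈ fIdeal F Z W := by
  obtain ⟨X₀, i₀, hc⟩ := hd
  obtain ⟨F₁, hF₁, a, b, hab⟩ := (mem_fIdeal_iff F hF.zero_mem hF.sum_mem _).mp hm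
  obtain ⟨PW, FW, iW, pW, hFW, hPW, happrox, hzW, hpker⟩ := hF.cond2 W
  obtain ⟨b₁, hb₁⟩ := happrox F₁ hF₁ b
  have hid : i₀ ≫ d = 0 := E.infl_comp_defl_zero hc
  have h1 : (i₀ ≫ a ≫ b₁) ≫ pW = 0 := by
    calc (i₀ ≫ a ≫ b₁) ≫ pW = i₀ ≫ a ≫ (b₁ ≫ pW) := by simp only [Category.assoc]
      _ = i₀ ≫ a ≫ b := by rw [hb₁]
      _ = i₀ ≫ d ≫ h := by rw [hab]
      _ = 0 := by rw [← Category.assoc, hid, Limits.zero_comp]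
  obtain ⟨t, ht⟩ := hpker (i₀ ≫ a ≫ b₁) h1
  have hPWinj : E.Inj PW := (hE.proj_iff_inj PW).mp hPW
  obtain ⟨t₁, ht₁⟩ := E.inj_extend hPWinj ⟨Z, d, hc⟩ t
  have h2 : i₀ ≫ (a ≫ b₁ - t₁ ≫ iW) = 0 := by
    rw [Preadditive.comp_sub, ← Category.assoc i₀ t₁ iW, ht₁, ht, sub_self]
  obtain ⟨u, hu, -⟩ := (E.coker_of_conflation hc).2 (a ≫ b₁ - t₁ ≫ iW) h2
  have h3 : d ≫ (u ≫ pW) = d ≫ h := by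
    rw [← Category.assoc, hu, Preadditive.sub_comp, Category.assoc t₁ iW pW, hzW,
      Limits.comp_zero, sub_zero, Category.assoc, hb₁, hab]
  have h4 : u ≫ pW = h := (E.coker_of_conflation hc).epi h3
  exact (mem_fIdeal_iff F hF.zero_mem hF.sum_mem _).mpr ⟨FW, hFW, u, pW, h4⟩

/-- A conflation maps to a kernel-cokernel pair in the factor category (kernel part). -/
theorem quotient_isKer (hF : FactorHyp E F) {X Y Z : A} {i : X ⟶ Y} {d : Y ⟶ Z}
    (hc : E.IsConflation i d) :
    IsKer ((fproj F).map i) ((fproj F).map d) := by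
  constructor
  · rw [← Functor.map_comp, E.infl_comp_defl_zero hc]
    rfl
  · intro Wbar gbar hg
    obtain ⟨W, rfl⟩ : ∃ W, Wbar = (fproj F).obj W := ⟨Wbar.obj, rfl⟩
    obtain ⟨g, rfl⟩ := pi_surjective F gbar
    rw [← Functor.map_comp, pi_eq_zero_iff] at hg
    obtain ⟨F₁, hF₁, s, t, hst⟩ := (mem_fIdeal_iff F hF.zero_mem hF.sum_mem _).mp hg
    obtain ⟨t', ht'⟩ := E.proj_lift (hF.proj F₁ hF₁) ⟨X, i, hc⟩ t
    have h2 : (g - s ≫ t') ≫ d = 0 := by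
      rw [Preadditive.sub_comp, Category.assoc, ht', hst, sub_self]
    obtain ⟨g₀, hg₀, -⟩ := (E.ker_of_conflation hc).2 (g - s ≫ t') h2
    have hA : (fproj F).map g₀ ≫ (fproj F).map i = (fproj F).map g := by
      rw [← Functor.map_comp, hg₀, pi_eq_iff]
      have h6 : g - (g - s ≫ t') = s ≫ t' := by abel
      rw [h6]
      exact (mem_fIdeal_iff F hF.zero_mem hF.sum_mem _).mpr ⟨F₁, hF₁, s, t', rfl⟩
    refine ⟨(fproj F).map g₀, hA, ?_⟩
    intro ybar hy
    obtain ⟨y, rfl⟩ := pi_surjective F ybar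
    have hy' : (fproj F).map y ≫ (fproj F).map i = (fproj F).map g := hy
    have hdiff : (g₀ - y) ≫ i ∈ fIdeal F W Y := by
      rw [← pi_eq_zero_iff (F := F), Functor.map_comp, pi_map_sub, Preadditive.sub_comp,
        hA, hy', sub_self]
    have h7 := fIdeal_cancel_of_inflation hF ⟨Z, d, hc⟩ hdiff
    rw [pi_eq_iff]
    exact h7

/-- A conflation maps to a kernel-cokernel pair in the factor category (cokernel part). -/
theorem quotient_isCoker (hF : FactorHyp E F) (hE : E.IsFrobenius) {X Y Z : A}
    {i : X ⟶ Y} {d : Y ⟶ Z} (hc : E.IsConflation i d) :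
    IsCoker ((fproj F).map i) ((fproj F).map d) := by
  constructor
  · rw [← Functor.map_comp, E.infl_comp_defl_zero hc]
    rfl
  · intro Wbar gbar hg
    obtain ⟨W, rfl⟩ : ∃ W, Wbar = (fproj F).obj W := ⟨Wbar.obj, rfl⟩
    obtain ⟨g, rfl⟩ := pi_surjective F gbar
    rw [← Functor.map_comp, pi_eq_zero_iff] at hg
    obtain ⟨F₁, hF₁, s, t, hst⟩ := (mem_fIdeal_iff F hF.zero_mem hF.sum_mem _).mp hg
    have hF₁inj : E.Inj F₁ := (hE.proj_iff_inj F₁).mp (hF.proj F₁ hF₁)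
    obtain ⟨s', hs'⟩ := E.inj_extend hF₁inj ⟨Z, d, hc⟩ s
    have h2 : i ≫ (g - s' ≫ t) = 0 := by
      rw [Preadditive.comp_sub, ← Category.assoc, hs', hst, sub_self]
    obtain ⟨g₀, hg₀, -⟩ := (E.coker_of_conflation hc).2 (g - s' ≫ t) h2
    have hA : (fproj F).map d ≫ (fproj F).map g₀ = (fproj F).map g := by
      rw [← Functor.map_comp, hg₀, pi_eq_iff]
      have h6 : g - (g - s' ≫ t) = s' ≫ t := by abel
      rw [h6]
      exact (mem_fIdeal_iff F hF.zero_mem hF.sum_mem _).mpr ⟨F₁, hF₁, s', t, rfl⟩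
    refine ⟨(fproj F).map g₀, hA, ?_⟩
    intro ybar hy
    obtain ⟨y, rfl⟩ := pi_surjective F ybar
    have hy' : (fproj F).map d ≫ (fproj F).map y = (fproj F).map g := hy
    have hdiff : d ≫ (g₀ - y) ∈ fIdeal F Y W := by
      rw [← pi_eq_zero_iff (F := F), Functor.map_comp, pi_map_sub, Preadditive.comp_sub,
        hA, hy', sub_self]
    have h7 := fIdeal_cancel_of_deflation hF hE ⟨X, i, hc⟩ hdiff
    rw [pi_eq_iff]
    exact h7

end QuotKer

end Paper
namespace Paper

open CategoryTheory Limits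

section QuotPB

variable {A : Type u} [Category.{v} A] [Preadditive A] [HasZeroObject A] [HasBinaryBiproducts A]
variable {E : ExactStructure A} {F : Set A}

/-- Key cancellation: if `c ≫ d'' ∈ [F]` and `c ≫ f'' ∈ [F]` for a pullback square of
conflations, then `c ∈ [F]`. -/
theorem fIdeal_of_pullback (hF : FactorHyp E F)
    {Y'' Z'' Y' Z : A} {d'' : Y'' ⟶ Z''} {f'' : Y'' ⟶ Y'} {g : Z'' ⟶ Z} {d' : Y' ⟶ Z}
    (hpb : IsPullback d'' f'' g d')
    {X₀ : A} {i₀ : X₀ ⟶ Y''} (hc'' : E.IsConflation i₀ d'')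
    {X' : A} {i' : X' ⟶ Y'} (hc' : E.IsConflation i' d')
    {W : A} {c : W ⟶ Y''} (h1 : c ≫ d'' ∈ fIdeal F W Z'') (h2 : c ≫ f'' ∈ fIdeal F W Y') :
    c ∈ fIdeal F W Y'' := by
  obtain ⟨F₁, hF₁, s, t, hst⟩ := (mem_fIdeal_iff F hF.zero_mem hF.sum_mem _).mp h1
  obtain ⟨t', ht'⟩ := E.proj_lift (hF.proj F₁ hF₁) ⟨X₀, i₀, hc''⟩ t
  have h3 : (c - s ≫ t') ≫ d'' = 0 := by
    rw [Preadditive.sub_comp, Category.assoc, ht', hst, sub_self]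
  obtain ⟨w, hw, -⟩ := (E.ker_of_conflation hc'').2 (c - s ≫ t') h3
  -- the comparison isomorphism between the kernel of `d''` and the kernel of `d'`
  have hker : i₀ ≫ f'' ≫ d' = 0 := by
    rw [← hpb.w, ← Category.assoc, E.infl_comp_defl_zero hc'', Limits.zero_comp]
  rw [← Category.assoc] at hker
  obtain ⟨w₀, hw₀, -⟩ := (E.ker_of_conflation hc').2 (i₀ ≫ f'') hker
  have wj : (0 : X' ⟶ Z'') ≫ g = i' ≫ d' := by
    rw [E.infl_comp_defl_zero hc', Limits.zero_comp]
  set j : X' ⟶ Y'' := hpb.lift 0 i' wj with hj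
  have hjd : j ≫ d'' = 0 := hpb.lift_fst _ _ wj
  have hjf : j ≫ f'' = i' := hpb.lift_snd _ _ wj
  obtain ⟨v₀, hv₀, -⟩ := (E.ker_of_conflation hc'').2 j hjd
  have hvw : v₀ ≫ w₀ = 𝟙 X' := by
    apply (E.ker_of_conflation hc').mono
    rw [Category.assoc, hw₀, ← Category.assoc, hv₀, hjf, Category.id_comp]
  have hwj : w₀ ≫ j = i₀ := by
    apply hpb.hom_ext
    · rw [Category.assoc, hjd, Limits.comp_zero, E.infl_comp_defl_zero hc'']
    · rw [Category.assoc, hjf, hw₀]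
  have hwv : w₀ ≫ v₀ = 𝟙 X₀ := by
    apply (E.ker_of_conflation hc'').mono
    rw [Category.assoc, hv₀, hwj, Category.id_comp]
  have : IsIso w₀ := ⟨v₀, hwv, hvw⟩
  have hinfl : E.IsInflation (i₀ ≫ f'') := by
    rw [← hw₀]
    exact E.ex1op (E.isInflation_of_isIso w₀) ⟨Z, d', hc'⟩
  have h4 : w ≫ (i₀ ≫ f'') ∈ fIdeal F W Y' := by
    have h5 : w ≫ i₀ ≫ f'' = c ≫ f'' - (s ≫ t') ≫ f'' := by
      rw [← Category.assoc, hw, Preadditive.sub_comp]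
    rw [h5]
    exact sub_mem h2 (fIdeal_comp_right F
      ((mem_fIdeal_iff F hF.zero_mem hF.sum_mem _).mpr ⟨F₁, hF₁, s, t', rfl⟩) f'')
  have h6 := fIdeal_cancel_of_inflation hF hinfl h4
  have h7 : c = w ≫ i₀ + s ≫ t' := by rw [hw]; abel
  rw [h7]
  exact add_mem (fIdeal_comp_right F h6 i₀)
    ((mem_fIdeal_iff F hF.zero_mem hF.sum_mem _).mpr ⟨F₁, hF₁, s, t', rfl⟩)

/-- The projection functor preserves pullback squares along deflations. -/
theorem quotient_isPullback (hF : FactorHyp E F)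
    {Y'' Z'' Y' Z : A} {d'' : Y'' ⟶ Z''} {f'' : Y'' ⟶ Y'} {g : Z'' ⟶ Z} {d' : Y' ⟶ Z}
    (hpb : IsPullback d'' f'' g d')
    {X₀ : A} {i₀ : X₀ ⟶ Y''} (hc'' : E.IsConflation i₀ d'')
    {X' : A} {i' : X' ⟶ Y'} (hc' : E.IsConflation i' d') :
    IsPullback ((fproj F).map d'') ((fproj F).map f'') ((fproj F).map g) ((fproj F).map d') := by
  refine mk_isPullback ?_ ?_ ?_
  · rw [← Functor.map_comp, ← Functor.map_comp, hpb.w]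
  · rintro Wbar xbar ybar hxy
    obtain ⟨W, rfl⟩ : ∃ W, Wbar = (fproj F).obj W := ⟨Wbar.obj, rfl⟩
    obtain ⟨x, rfl⟩ := pi_surjective F xbar
    obtain ⟨y, rfl⟩ := pi_surjective F ybar
    have hmem : y ≫ d' - x ≫ g ∈ fIdeal F W Z := by
      rw [← pi_eq_iff]
      rw [Functor.map_comp, Functor.map_comp]
      exact hxy
    obtain ⟨F₁, hF₁, s, t, hst⟩ := (mem_fIdeal_iff F hF.zero_mem hF.sum_mem _).mp hmem
    obtain ⟨t₁, ht₁⟩ := E.proj_lift (hF.proj F₁ hF₁) ⟨X', i', hc'⟩ t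
    have w : x ≫ g = (y - s ≫ t₁) ≫ d' := by
      rw [Preadditive.sub_comp, Category.assoc, ht₁, hst]
      abel
    refine ⟨(fproj F).map (hpb.lift x (y - s ≫ t₁) w), ?_, ?_⟩
    · rw [← Functor.map_comp, hpb.lift_fst]
    · rw [← Functor.map_comp, hpb.lift_snd, pi_map_sub]
      have : (fproj F).map (s ≫ t₁) = 0 := by
        rw [pi_eq_zero_iff]
        exact (mem_fIdeal_iff F hF.zero_mem hF.sum_mem _).mpr ⟨F₁, hF₁, s, t₁, rfl⟩
      rw [this, sub_zero]
  · rintro Wbar c₁ c₂ e1 e2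
    obtain ⟨W, rfl⟩ : ∃ W, Wbar = (fproj F).obj W := ⟨Wbar.obj, rfl⟩
    obtain ⟨c₁₀, rfl⟩ := pi_surjective F c₁
    obtain ⟨c₂₀, rfl⟩ := pi_surjective F c₂
    rw [pi_eq_iff]
    refine fIdeal_of_pullback hF hpb hc'' hc' ?_ ?_
    · have : (fproj F).map (c₁₀ ≫ d'') = (fproj F).map (c₂₀ ≫ d'') := by
        rw [Functor.map_comp, Functor.map_comp]; exact e1
      have h := (pi_eq_iff F _ _).mp this
      have h2 : (c₂₀ - c₁₀) ≫ d'' = c₂₀ ≫ d'' - c₁₀ ≫ d'' := Preadditive.sub_comp _ _ _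
      rw [h2]
      exact h
    · have : (fproj F).map (c₁₀ ≫ f'') = (fproj F).map (c₂₀ ≫ f'') := by
        rw [Functor.map_comp, Functor.map_comp]; exact e2
      have h := (pi_eq_iff F _ _).mp this
      have h2 : (c₂₀ - c₁₀) ≫ f'' = c₂₀ ≫ f'' - c₁₀ ≫ f'' := Preadditive.sub_comp _ _ _
      rw [h2]
      exact h

end QuotPB

end Paper
namespace Paper

open CategoryTheory Limits

section QuotPO

variable {A : Type u} [Category.{v} A] [Preadditive A] [HasZeroObject A] [HasBinaryBiproducts A]
variable {E : ExactStructure A} {F : Set A}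

/-- Key cancellation, dual form: for a pushout square of conflations, if `f' ≫ c ∈ [F]`
and `i' ≫ c ∈ [F]` then `c ∈ [F]`. -/
theorem fIdeal_of_pushout (hF : FactorHyp E F) (hE : E.IsFrobenius)
    {X Y X'' Y₀ : A} {i : X ⟶ Y} {u : X ⟶ X''} {f' : Y ⟶ Y₀} {i' : X'' ⟶ Y₀}
    (hpo : IsPushout i u f' i')
    {C₀ : A} {d₀ : Y ⟶ C₀} (hc₀ : E.IsConflation i d₀)
    {C₁ : A} {d₁ : Y₀ ⟶ C₁} (hc₁ : E.IsConflation i' d₁)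
    {W : A} {c : Y₀ ⟶ W} (h1 : i' ≫ c ∈ fIdeal F X'' W) (h2 : f' ≫ c ∈ fIdeal F Y W) :
    c ∈ fIdeal F Y₀ W := by
  obtain ⟨F₁, hF₁, s, t, hst⟩ := (mem_fIdeal_iff F hF.zero_mem hF.sum_mem _).mp h1
  have hF₁inj : E.Inj F₁ := (hE.proj_iff_inj F₁).mp (hF.proj F₁ hF₁)
  obtain ⟨s₁, hs₁⟩ := E.inj_extend hF₁inj ⟨C₁, d₁, hc₁⟩ s
  have h3 : i' ≫ (c - s₁ ≫ t) = 0 := by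
    rw [Preadditive.comp_sub, ← Category.assoc, hs₁, hst, sub_self]
  obtain ⟨w, hw, -⟩ := (E.coker_of_conflation hc₁).2 (c - s₁ ≫ t) h3
  -- the comparison isomorphism between the cokernel of `i` and the cokernel of `i'`
  have hcok : i ≫ f' ≫ d₁ = 0 := by
    rw [← Category.assoc, hpo.w, Category.assoc, E.infl_comp_defl_zero hc₁, Limits.comp_zero]
  obtain ⟨w₀, hw₀, -⟩ := (E.coker_of_conflation hc₀).2 (f' ≫ d₁) hcok
  have wj : i ≫ d₀ = u ≫ (0 : X'' ⟶ C₀) := by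
    rw [E.infl_comp_defl_zero hc₀, Limits.comp_zero]
  set j : Y₀ ⟶ C₀ := hpo.desc d₀ 0 wj with hj
  have hjf : f' ≫ j = d₀ := hpo.inl_desc _ _ wj
  have hji : i' ≫ j = 0 := hpo.inr_desc _ _ wj
  obtain ⟨v₀, hv₀, -⟩ := (E.coker_of_conflation hc₁).2 j hji
  have hwv : w₀ ≫ v₀ = 𝟙 C₀ := by
    apply (E.coker_of_conflation hc₀).epi
    rw [← Category.assoc, hw₀, Category.assoc, hv₀, hjf, Category.comp_id]
  have hjw : j ≫ w₀ = d₁ := by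
    apply hpo.hom_ext
    · rw [← Category.assoc, hjf, hw₀]
    · rw [← Category.assoc, hji, Limits.zero_comp, E.infl_comp_defl_zero hc₁]
  have hvw : v₀ ≫ w₀ = 𝟙 C₁ := by
    apply (E.coker_of_conflation hc₁).epi
    rw [← Category.assoc, hv₀, hjw, Category.comp_id]
  have : IsIso w₀ := ⟨v₀, hwv, hvw⟩
  have hdefl : E.IsDeflation (f' ≫ d₁) := by
    rw [← hw₀]
    exact E.ex1 ⟨X, i, hc₀⟩ (E.isDeflation_of_isIso w₀)
  have h4 : (f' ≫ d₁) ≫ w ∈ fIdeal F Y W := by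
    have h5 : (f' ≫ d₁) ≫ w = f' ≫ c - f' ≫ s₁ ≫ t := by
      rw [Category.assoc, hw, Preadditive.comp_sub]
    rw [h5]
    exact sub_mem h2 (fIdeal_comp_left F f'
      ((mem_fIdeal_iff F hF.zero_mem hF.sum_mem _).mpr ⟨F₁, hF₁, s₁, t, rfl⟩))
  have h6 := fIdeal_cancel_of_deflation hF hE hdefl h4
  have h7 : c = d₁ ≫ w + s₁ ≫ t := by rw [hw]; abel
  rw [h7]
  exact add_mem (fIdeal_comp_left F d₁ h6)
    ((mem_fIdeal_iff F hF.zero_mem hF.sum_mem _).mpr ⟨F₁, hF₁, s₁, t, rfl⟩)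

/-- The projection functor preserves pushout squares along inflations. -/
theorem quotient_isPushout (hF : FactorHyp E F) (hE : E.IsFrobenius)
    {X Y X'' Y₀ : A} {i : X ⟶ Y} {u : X ⟶ X''} {f' : Y ⟶ Y₀} {i' : X'' ⟶ Y₀}
    (hpo : IsPushout i u f' i')
    {C₀ : A} {d₀ : Y ⟶ C₀} (hc₀ : E.IsConflation i d₀)
    {C₁ : A} {d₁ : Y₀ ⟶ C₁} (hc₁ : E.IsConflation i' d₁) :
    IsPushout ((fproj F).map i) ((fproj F).map u) ((fproj F).map f') ((fproj F).map i') := by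
  refine mk_isPushout ?_ ?_ ?_
  · rw [← Functor.map_comp, ← Functor.map_comp, hpo.w]
  · rintro Wbar xbar ybar hxy
    obtain ⟨W, rfl⟩ : ∃ W, Wbar = (fproj F).obj W := ⟨Wbar.obj, rfl⟩
    obtain ⟨x, rfl⟩ := pi_surjective F xbar
    obtain ⟨y, rfl⟩ := pi_surjective F ybar
    have hmem : u ≫ y - i ≫ x ∈ fIdeal F X W := by
      rw [← pi_eq_iff, Functor.map_comp, Functor.map_comp]
      exact hxy
    obtain ⟨F₁, hF₁, s, t, hst⟩ := (mem_fIdeal_iff F hF.zero_mem hF.sum_mem _).mp hmem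
    have hF₁inj : E.Inj F₁ := (hE.proj_iff_inj F₁).mp (hF.proj F₁ hF₁)
    obtain ⟨s₁, hs₁⟩ := E.inj_extend hF₁inj ⟨C₀, d₀, hc₀⟩ s
    have w : i ≫ (x + s₁ ≫ t) = u ≫ y := by
      rw [Preadditive.comp_add, ← Category.assoc, hs₁, hst]
      abel
    refine ⟨(fproj F).map (hpo.desc (x + s₁ ≫ t) y w), ?_, ?_⟩
    · rw [← Functor.map_comp, hpo.inl_desc]
      have : (fproj F).map (x + s₁ ≫ t) = (fproj F).map x + (fproj F).map (s₁ ≫ t) :=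
        pi_map_add F _ _
      rw [this]
      have hz : (fproj F).map (s₁ ≫ t) = 0 := by
        rw [pi_eq_zero_iff]
        exact (mem_fIdeal_iff F hF.zero_mem hF.sum_mem _).mpr ⟨F₁, hF₁, s₁, t, rfl⟩
      rw [hz, add_zero]
    · rw [← Functor.map_comp, hpo.inr_desc]
  · rintro Wbar c₁ c₂ e1 e2
    obtain ⟨W, rfl⟩ : ∃ W, Wbar = (fproj F).obj W := ⟨Wbar.obj, rfl⟩
    obtain ⟨c₁₀, rfl⟩ := pi_surjective F c₁
    obtain ⟨c₂₀, rfl⟩ := pi_surjective F c₂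
    rw [pi_eq_iff]
    refine fIdeal_of_pushout hF hE hpo hc₀ hc₁ ?_ ?_
    · have : (fproj F).map (i' ≫ c₁₀) = (fproj F).map (i' ≫ c₂₀) := by
        rw [Functor.map_comp, Functor.map_comp]; exact e2
      have h := (pi_eq_iff F _ _).mp this
      have h2 : i' ≫ (c₂₀ - c₁₀) = i' ≫ c₂₀ - i' ≫ c₁₀ := Preadditive.comp_sub _ _ _
      rw [h2]; exact h
    · have : (fproj F).map (f' ≫ c₁₀) = (fproj F).map (f' ≫ c₂₀) := by
        rw [Functor.map_comp, Functor.map_comp]; exact e1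
      have h := (pi_eq_iff F _ _).mp this
      have h2 : f' ≫ (c₂₀ - c₁₀) = f' ≫ c₂₀ - f' ≫ c₁₀ := Preadditive.comp_sub _ _ _
      rw [h2]; exact h

end QuotPO

end Paper
namespace Paper

open CategoryTheory Limits

section QuotDefl

variable {A : Type u} [Category.{v} A] [Preadditive A] [HasZeroObject A] [HasBinaryBiproducts A]
variable {E : ExactStructure A} {F : Set A}

/-- Representation of a quotient deflation: a member of `E_F` ending at `db` yields an honest
deflation in `A`, corrected by an isomorphism of the factor category. -/
theorem rep_of_memEF_deflation (hF : FactorHyp E F) {X₀ Y₀ : A}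
    {Xb : FObj A F} {ib : Xb ⟶ (fproj F).obj X₀} {db : (fproj F).obj X₀ ⟶ (fproj F).obj Y₀}
    (hm : MemEF E F ib db) :
    ∃ (M : A) (g : M ⟶ Y₀) (e : M ⟶ X₀), E.IsDeflation g ∧
      IsIso ((fproj F).map e) ∧ (fproj F).map g = (fproj F).map e ≫ db := by
  obtain ⟨X', Y', Z', i', d', hc, eX, eY, eZ, hsq1, hsq2⟩ := hm
  obtain ⟨w, hw⟩ := pi_surjective F (X := Y₀) (Y := Z') eZ.inv
  obtain ⟨M, g, f'', hpb, X₁, i₁, hc₁⟩ := E.ex2 d' w ⟨X', i', hc⟩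
  have hq := quotient_isPullback hF hpb hc₁ hc
  have hwiso : IsIso ((fproj F).map w) := by rw [hw]; infer_instance
  have hf''iso : IsIso ((fproj F).map f'') := isPullback_isIso_snd hq hwiso
  obtain ⟨y, hy⟩ := pi_surjective F (X := Y') (Y := X₀) eY.hom
  refine ⟨M, g, f'' ≫ y, ⟨X₁, i₁, hc₁⟩, ?_, ?_⟩
  · rw [Functor.map_comp, hy]
    exact (IsIso.comp_isIso' hf''iso inferInstance)
  · rw [Functor.map_comp, hy, Category.assoc, ← hsq2, ← Category.assoc, ← Functor.map_comp,
      ← hpb.w, Functor.map_comp, Category.assoc, hw]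
    simp

/-- Packaging: an honest deflation corrected by an isomorphism of the factor category
gives a member of `E_F`. -/
theorem memEF_deflation_of_rep {X₀ Y₀ : A}
    (db : (fproj F).obj X₀ ⟶ (fproj F).obj Y₀) {M : A} (g : M ⟶ Y₀) (e : M ⟶ X₀)
    (hg : E.IsDeflation g) (he : IsIso ((fproj F).map e))
    (heq : (fproj F).map g = (fproj F).map e ≫ db) :
    ∃ (Xb : FObj A F) (ib : Xb ⟶ (fproj F).obj X₀), MemEF E F ib db := by
  obtain ⟨K, i₀, hc⟩ := hg
  refine ⟨(fproj F).obj K, (fproj F).map i₀ ≫ (fproj F).map e,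
    K, M, Y₀, i₀, g, hc, Iso.refl _, asIso ((fproj F).map e), Iso.refl _, ?_, ?_⟩
  · simp [asIso]
  · simp only [asIso, Iso.refl_hom, Category.comp_id]
    exact heq

/-- Representation of a quotient inflation. -/
theorem rep_of_memEF_inflation (hF : FactorHyp E F) (hE : E.IsFrobenius) {X₀ Y₀ : A}
    {Zb : FObj A F} {ib : (fproj F).obj X₀ ⟶ (fproj F).obj Y₀} {db : (fproj F).obj Y₀ ⟶ Zb}
    (hm : MemEF E F ib db) :
    ∃ (M : A) (g : X₀ ⟶ M) (e : Y₀ ⟶ M), E.IsInflation g ∧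
      IsIso ((fproj F).map e) ∧ (fproj F).map g = ib ≫ (fproj F).map e := by
  obtain ⟨X', Y', Z', i', d', hc, eX, eY, eZ, hsq1, hsq2⟩ := hm
  obtain ⟨u, hu⟩ := pi_surjective F (X := X') (Y := X₀) eX.hom
  obtain ⟨M, i₁, f₁, hpo, C₂, d₂, hc₂⟩ := E.ex2op i' u ⟨Z', d', hc⟩
  have hq := quotient_isPushout hF hE hpo hc hc₂
  have huiso : IsIso ((fproj F).map u) := by rw [hu]; infer_instance
  have hf₁iso : IsIso ((fproj F).map f₁) := isPushout_isIso_inr hq.flip huiso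
  obtain ⟨y, hy⟩ := pi_surjective F (X := Y₀) (Y := Y') eY.inv
  refine ⟨M, i₁, y ≫ f₁, ⟨C₂, d₂, hc₂⟩, ?_, ?_⟩
  · rw [Functor.map_comp, hy]
    exact (IsIso.comp_isIso' inferInstance hf₁iso)
  · have hib : ib = eX.inv ≫ (fproj F).map i' ≫ eY.hom := by
      rw [hsq1]; simp
    rw [Functor.map_comp, hy, hib]
    simp only [Category.assoc, Iso.hom_inv_id_assoc]
    rw [← Functor.map_comp, hpo.w, Functor.map_comp, hu]
    simp

/-- Packaging: an honest inflation corrected by an isomorphism of the factor category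
gives a member of `E_F`. -/
theorem memEF_inflation_of_rep {X₀ Y₀ : A}
    (ib : (fproj F).obj X₀ ⟶ (fproj F).obj Y₀) {M : A} (g : X₀ ⟶ M) (e : Y₀ ⟶ M)
    (hg : E.IsInflation g) (he : IsIso ((fproj F).map e))
    (heq : (fproj F).map g = ib ≫ (fproj F).map e) :
    ∃ (Zb : FObj A F) (db : (fproj F).obj Y₀ ⟶ Zb), MemEF E F ib db := by
  obtain ⟨C, d₀, hc⟩ := hg
  refine ⟨(fproj F).obj C, (fproj F).map e ≫ (fproj F).map d₀,
    X₀, M, C, g, d₀, hc, Iso.refl _, (asIso ((fproj F).map e)).symm, Iso.refl _, ?_, ?_⟩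
  · simp only [asIso, Iso.symm_hom, Iso.refl_hom, Category.id_comp]
    rw [heq, Category.assoc]
    simp
  · simp [asIso]

end QuotDefl

end Paper
namespace Paper

open CategoryTheory Limits

section EFAxioms

variable {A : Type u} [Category.{v} A] [Preadditive A] [HasZeroObject A] [HasBinaryBiproducts A]
variable {E : ExactStructure A} {F : Set A}

theorem ef_ker (hF : FactorHyp E F) ⦃Xb Yb Zb : FObj A F⦄ {i : Xb ⟶ Yb} {d : Yb ⟶ Zb}
    (hm : MemEF E F i d) : IsKer i d := by
  obtain ⟨X', Y', Z', i', d', hc, eX, eY, eZ, h1, h2⟩ := hm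
  exact IsKer.of_iso eX eY eZ h1 h2 (quotient_isKer hF hc)

theorem ef_coker (hF : FactorHyp E F) (hE : E.IsFrobenius)
    ⦃Xb Yb Zb : FObj A F⦄ {i : Xb ⟶ Yb} {d : Yb ⟶ Zb}
    (hm : MemEF E F i d) : IsCoker i d := by
  obtain ⟨X', Y', Z', i', d', hc, eX, eY, eZ, h1, h2⟩ := hm
  exact IsCoker.of_iso eX eY eZ h1 h2 (quotient_isCoker hF hE hc)

theorem ef_iso_closed ⦃Xb Yb Zb Xb' Yb' Zb' : FObj A F⦄ {i : Xb ⟶ Yb} {d : Yb ⟶ Zb}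
    {i' : Xb' ⟶ Yb'} {d' : Yb' ⟶ Zb'} (eX : Xb ≅ Xb') (eY : Yb ≅ Yb') (eZ : Zb ≅ Zb')
    (h1 : i ≫ eY.hom = eX.hom ≫ i') (h2 : d ≫ eZ.hom = eY.hom ≫ d')
    (hm : MemEF E F i d) : MemEF E F i' d' := by
  obtain ⟨X₁, Y₁, Z₁, i₁, d₁, hc, fX, fY, fZ, s1, s2⟩ := hm
  refine ⟨X₁, Y₁, Z₁, i₁, d₁, hc, fX ≪≫ eX, fY ≪≫ eY, fZ ≪≫ eZ, ?_, ?_⟩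
  · simp only [Iso.trans_hom]
    rw [← Category.assoc, s1, Category.assoc, h1, ← Category.assoc]
  · simp only [Iso.trans_hom]
    rw [← Category.assoc, s2, Category.assoc, h2, ← Category.assoc]

theorem ef_ex0 ⦃Zb : FObj A F⦄ (hZ : IsZero Zb) :
    ∃ (Xb : FObj A F) (i : Xb ⟶ Zb), MemEF E F i (𝟙 Zb) := by
  obtain ⟨O, hO⟩ := HasZeroObject.zero (C := A)
  obtain ⟨X₀, i₀, hc₀⟩ := E.ex0 hO
  have hπO : IsZero ((fproj F).obj O) := by
    rw [IsZero.iff_id_eq_zero]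
    have h1 : (𝟙 O : O ⟶ O) = 0 := (IsZero.iff_id_eq_zero O).mp hO
    calc 𝟙 ((fproj F).obj O) = (fproj F).map (𝟙 O) := ((fproj F).map_id O).symm
      _ = (fproj F).map 0 := by rw [h1]
      _ = 0 := pi_map_zero F
  refine ⟨(fproj F).obj X₀, 0, X₀, O, O, i₀, 𝟙 O, hc₀,
    Iso.refl _, hπO.iso hZ, hπO.iso hZ, ?_, ?_⟩
  · exact hZ.eq_of_tgt _ _
  · exact hZ.eq_of_tgt _ _

theorem ef_ex1 (hF : FactorHyp E F) ⦃Yb Zb Wb : FObj A F⦄ {d : Yb ⟶ Zb} {e : Zb ⟶ Wb}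
    (hd : ∃ (Xb : FObj A F) (i : Xb ⟶ Yb), MemEF E F i d)
    (he : ∃ (Xb : FObj A F) (i : Xb ⟶ Zb), MemEF E F i e) :
    ∃ (Xb : FObj A F) (i : Xb ⟶ Yb), MemEF E F i (d ≫ e) := by
  obtain ⟨Y₀, rfl⟩ : ∃ Y₀, Yb = (fproj F).obj Y₀ := ⟨Yb.obj, rfl⟩; obtain ⟨Z₀, rfl⟩ : ∃ Z₀, Zb = (fproj F).obj Z₀ := ⟨Zb.obj, rfl⟩; obtain ⟨W₀, rfl⟩ : ∃ W₀, Wb = (fproj F).obj W₀ := ⟨Wb.obj, rfl⟩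
  obtain ⟨Xb1, i1, hm1⟩ := hd
  obtain ⟨Xb2, i2, hm2⟩ := he
  obtain ⟨M₁, g₁, e₁, hg₁, he₁, heq₁⟩ := rep_of_memEF_deflation hF hm1
  obtain ⟨M₂, g₂, e₂, hg₂, he₂, heq₂⟩ := rep_of_memEF_deflation hF hm2
  obtain ⟨K₁, k₁, hck₁⟩ := hg₁
  obtain ⟨N, q₁, q₂, hpb, K, k, hck⟩ := E.ex2 g₁ e₂ ⟨K₁, k₁, hck₁⟩
  have hq := quotient_isPullback hF hpb hck hck₁
  have hq₂iso : IsIso ((fproj F).map q₂) := isPullback_isIso_snd hq he₂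
  have hgdefl : E.IsDeflation (q₁ ≫ g₂) := E.ex1 ⟨K, k, hck⟩ hg₂
  have heiso : IsIso ((fproj F).map (q₂ ≫ e₁)) := by
    rw [Functor.map_comp]
    exact IsIso.comp_isIso' hq₂iso he₁
  obtain ⟨Xb, ib, hmem⟩ := memEF_deflation_of_rep (d ≫ e) (q₁ ≫ g₂) (q₂ ≫ e₁) hgdefl heiso (by
    calc (fproj F).map (q₁ ≫ g₂) = (fproj F).map q₁ ≫ (fproj F).map g₂ := Functor.map_comp _ _ _
      _ = (fproj F).map q₁ ≫ (fproj F).map e₂ ≫ e := by rw [heq₂]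
      _ = (fproj F).map (q₁ ≫ e₂) ≫ e := by rw [Functor.map_comp, Category.assoc]
      _ = (fproj F).map (q₂ ≫ g₁) ≫ e := by rw [hpb.w]
      _ = ((fproj F).map q₂ ≫ (fproj F).map g₁) ≫ e := by rw [Functor.map_comp]
      _ = ((fproj F).map q₂ ≫ (fproj F).map e₁ ≫ d) ≫ e := by rw [heq₁]
      _ = (fproj F).map (q₂ ≫ e₁) ≫ d ≫ e := by
          rw [Functor.map_comp]; simp only [Category.assoc])
  exact ⟨Xb, ib, hmem⟩

theorem ef_ex1op (hF : FactorHyp E F) (hE : E.IsFrobenius)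
    ⦃Xb Yb Wb : FObj A F⦄ {i : Xb ⟶ Yb} {j : Yb ⟶ Wb}
    (hi : ∃ (Zb : FObj A F) (d : Yb ⟶ Zb), MemEF E F i d)
    (hj : ∃ (Zb : FObj A F) (d : Wb ⟶ Zb), MemEF E F j d) :
    ∃ (Zb : FObj A F) (d : Wb ⟶ Zb), MemEF E F (i ≫ j) d := by
  obtain ⟨X₀, rfl⟩ : ∃ X₀, Xb = (fproj F).obj X₀ := ⟨Xb.obj, rfl⟩; obtain ⟨Y₀, rfl⟩ : ∃ Y₀, Yb = (fproj F).obj Y₀ := ⟨Yb.obj, rfl⟩; obtain ⟨W₀, rfl⟩ : ∃ W₀, Wb = (fproj F).obj W₀ := ⟨Wb.obj, rfl⟩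
  obtain ⟨Zb1, d1, hm1⟩ := hi
  obtain ⟨Zb2, d2, hm2⟩ := hj
  obtain ⟨M₁, g₁, e₁, hg₁, he₁, heq₁⟩ := rep_of_memEF_inflation hF hE hm1
  obtain ⟨M₂, g₂, e₂, hg₂, he₂, heq₂⟩ := rep_of_memEF_inflation hF hE hm2
  obtain ⟨C₂, c₂, hcc₂⟩ := hg₂
  obtain ⟨N, q₁, q₂, hpo, C, c, hcc⟩ := E.ex2op g₂ e₁ ⟨C₂, c₂, hcc₂⟩
  have hq := quotient_isPushout hF hE hpo hcc₂ hcc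
  have hq₂iso : IsIso ((fproj F).map q₂) := isPushout_isIso_inr hq.flip he₁
  have hginfl : E.IsInflation (g₁ ≫ q₁) := E.ex1op hg₁ ⟨C, c, hcc⟩
  have heiso : IsIso ((fproj F).map (e₂ ≫ q₂)) := by
    rw [Functor.map_comp]
    exact IsIso.comp_isIso' he₂ hq₂iso
  obtain ⟨Zb, db, hmem⟩ := memEF_inflation_of_rep (i ≫ j) (g₁ ≫ q₁) (e₂ ≫ q₂) hginfl heiso (by
    calc (fproj F).map (g₁ ≫ q₁) = (fproj F).map g₁ ≫ (fproj F).map q₁ := Functor.map_comp _ _ _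
      _ = (i ≫ (fproj F).map e₁) ≫ (fproj F).map q₁ := by rw [heq₁]
      _ = i ≫ (fproj F).map (e₁ ≫ q₁) := by rw [Functor.map_comp]; simp only [Category.assoc]
      _ = i ≫ (fproj F).map (g₂ ≫ q₂) := by rw [← hpo.w]
      _ = i ≫ (fproj F).map g₂ ≫ (fproj F).map q₂ := by rw [Functor.map_comp]
      _ = i ≫ (j ≫ (fproj F).map e₂) ≫ (fproj F).map q₂ := by rw [heq₂]
      _ = (i ≫ j) ≫ (fproj F).map (e₂ ≫ q₂) := by
          rw [Functor.map_comp]; simp only [Category.assoc])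
  exact ⟨Zb, db, hmem⟩

theorem ef_ex2 (hF : FactorHyp E F) ⦃Yb Zb Zb' : FObj A F⦄ (d : Yb ⟶ Zb) (f : Zb' ⟶ Zb)
    (hd : ∃ (Xb : FObj A F) (i : Xb ⟶ Yb), MemEF E F i d) :
    ∃ (Yb' : FObj A F) (d' : Yb' ⟶ Zb') (f' : Yb' ⟶ Yb),
      IsPullback d' f' f d ∧ ∃ (Xb : FObj A F) (i : Xb ⟶ Yb'), MemEF E F i d' := by
  obtain ⟨Y₀, rfl⟩ : ∃ Y₀, Yb = (fproj F).obj Y₀ := ⟨Yb.obj, rfl⟩; obtain ⟨Z₀, rfl⟩ : ∃ Z₀, Zb = (fproj F).obj Z₀ := ⟨Zb.obj, rfl⟩; obtain ⟨Z₀', rfl⟩ : ∃ Z₀', Zb' = (fproj F).obj Z₀' := ⟨Zb'.obj, rfl⟩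
  obtain ⟨Xb1, i1, hm1⟩ := hd
  obtain ⟨M, g, e, hg, he, heq⟩ := rep_of_memEF_deflation hF hm1
  obtain ⟨f₀, hf₀⟩ := pi_surjective F (X := Z₀') (Y := Z₀) f
  obtain ⟨K₁, k₁, hck₁⟩ := hg
  obtain ⟨N, δ, φ, hpb, K, k, hck⟩ := E.ex2 g f₀ ⟨K₁, k₁, hck₁⟩
  have hq := quotient_isPullback hF hpb hck hck₁
  rw [hf₀, heq] at hq
  have hq2 := isPullback_cancel_iso hq he
  refine ⟨(fproj F).obj N, (fproj F).map δ, (fproj F).map φ ≫ (fproj F).map e, hq2,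
    (fproj F).obj K, (fproj F).map k, K, N, Z₀', k, δ, hck,
    Iso.refl _, Iso.refl _, Iso.refl _, by simp, by simp⟩

theorem ef_ex2op (hF : FactorHyp E F) (hE : E.IsFrobenius)
    ⦃Xb Yb Xb' : FObj A F⦄ (i : Xb ⟶ Yb) (f : Xb ⟶ Xb')
    (hi : ∃ (Zb : FObj A F) (d : Yb ⟶ Zb), MemEF E F i d) :
    ∃ (Yb' : FObj A F) (i' : Xb' ⟶ Yb') (f' : Yb ⟶ Yb'),
      IsPushout i f f' i' ∧ ∃ (Zb : FObj A F) (d : Yb' ⟶ Zb), MemEF E F i' d := by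
  obtain ⟨X₀, rfl⟩ : ∃ X₀, Xb = (fproj F).obj X₀ := ⟨Xb.obj, rfl⟩; obtain ⟨Y₀, rfl⟩ : ∃ Y₀, Yb = (fproj F).obj Y₀ := ⟨Yb.obj, rfl⟩; obtain ⟨X₀', rfl⟩ : ∃ X₀', Xb' = (fproj F).obj X₀' := ⟨Xb'.obj, rfl⟩
  obtain ⟨Zb1, d1, hm1⟩ := hi
  obtain ⟨M, g, e, hg, he, heq⟩ := rep_of_memEF_inflation hF hE hm1
  obtain ⟨f₀, hf₀⟩ := pi_surjective F (X := X₀) (Y := X₀') f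
  obtain ⟨C₁, c₁, hcc₁⟩ := hg
  obtain ⟨N, i₁, f₁, hpo, C, c, hcc⟩ := E.ex2op g f₀ ⟨C₁, c₁, hcc₁⟩
  have hq := quotient_isPushout hF hE hpo hcc₁ hcc
  rw [hf₀, heq] at hq
  have hq2 := isPushout_cancel_iso hq he
  refine ⟨(fproj F).obj N, (fproj F).map i₁, (fproj F).map e ≫ (fproj F).map f₁, hq2,
    (fproj F).obj C, (fproj F).map c, X₀', N, C, i₁, c, hcc,
    Iso.refl _, Iso.refl _, Iso.refl _, by simp, by simp⟩

end EFAxioms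

end Paper
namespace Paper

open CategoryTheory Limits

section EFFrobenius

variable {A : Type u} [Category.{v} A] [Preadditive A] [HasZeroObject A] [HasBinaryBiproducts A]
variable {E : ExactStructure A} {F : Set A}

/-- The image of a projective object is projective in the factor category. -/
theorem ef_proj_of_proj (hF : FactorHyp E F) (E'' : ExactStructure (FObj A F))
    (hiff : ∀ ⦃X Y Z : FObj A F⦄ (i : X ⟶ Y) (d : Y ⟶ Z),
      E''.IsConflation i d ↔ MemEF E F i d)
    {Q : A} (hQ : E.Proj Q) : E''.Proj ((fproj F).obj Q) := by
  intro Yb dd hdd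
  obtain ⟨Y₁, rfl⟩ : ∃ Y₁, Yb = (fproj F).obj Y₁ := ⟨Yb.obj, rfl⟩
  obtain ⟨Xb2, ib2, hm⟩ := hdd
  rw [hiff] at hm
  obtain ⟨M, g, e, hg, he, heq⟩ := rep_of_memEF_deflation hF hm
  obtain ⟨s, hs⟩ := hQ g hg
  refine ⟨(fproj F).map s ≫ (fproj F).map e, ?_⟩
  rw [Category.assoc, ← heq, ← Functor.map_comp, hs]
  rfl

/-- The image of an injective object is injective in the factor category. -/
theorem ef_inj_of_inj (hF : FactorHyp E F) (hE : E.IsFrobenius)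
    (E'' : ExactStructure (FObj A F))
    (hiff : ∀ ⦃X Y Z : FObj A F⦄ (i : X ⟶ Y) (d : Y ⟶ Z),
      E''.IsConflation i d ↔ MemEF E F i d)
    {I : A} (hI : E.Inj I) : E''.Inj ((fproj F).obj I) := by
  intro Yb ii hii
  obtain ⟨Y₁, rfl⟩ : ∃ Y₁, Yb = (fproj F).obj Y₁ := ⟨Yb.obj, rfl⟩
  obtain ⟨Zb2, db2, hm⟩ := hii
  rw [hiff] at hm
  obtain ⟨M, g, e, hg, he, heq⟩ := rep_of_memEF_inflation hF hE hm
  obtain ⟨r, hr⟩ := hI g hg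
  refine ⟨(fproj F).map e ≫ (fproj F).map r, ?_⟩
  rw [← Category.assoc, ← heq, ← Functor.map_comp, hr]
  rfl

theorem ef_frobenius (hF : FactorHyp E F) (hE : E.IsFrobenius)
    (E'' : ExactStructure (FObj A F))
    (hiff : ∀ ⦃X Y Z : FObj A F⦄ (i : X ⟶ Y) (d : Y ⟶ Z),
      E''.IsConflation i d ↔ MemEF E F i d) : E''.IsFrobenius := by
  have enoughP : E''.EnoughProj := by
    intro Xb
    obtain ⟨X₀, rfl⟩ : ∃ X₀, Xb = (fproj F).obj X₀ := ⟨Xb.obj, rfl⟩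
    obtain ⟨Q, q, hQ, hq⟩ := hE.enoughProj X₀
    obtain ⟨K, k, hck⟩ := hq
    refine ⟨(fproj F).obj Q, (fproj F).map q, ef_proj_of_proj hF E'' hiff hQ,
      (fproj F).obj K, (fproj F).map k, (hiff _ _).mpr ⟨K, Q, X₀, k, q, hck,
        Iso.refl _, Iso.refl _, Iso.refl _, by simp, by simp⟩⟩
  have enoughI : E''.EnoughInj := by
    intro Xb
    obtain ⟨X₀, rfl⟩ : ∃ X₀, Xb = (fproj F).obj X₀ := ⟨Xb.obj, rfl⟩
    obtain ⟨I, i, hI, hi⟩ := hE.enoughInj X₀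
    obtain ⟨C, c, hcc⟩ := hi
    refine ⟨(fproj F).obj I, (fproj F).map i, ef_inj_of_inj hF hE E'' hiff hI,
      (fproj F).obj C, (fproj F).map c, (hiff _ _).mpr ⟨X₀, I, C, i, c, hcc,
        Iso.refl _, Iso.refl _, Iso.refl _, by simp, by simp⟩⟩
  refine ⟨enoughP, enoughI, ?_⟩
  intro Xb
  constructor
  · intro hP
    obtain ⟨Pb, db, hPb, hdb⟩ := enoughP Xb
    obtain ⟨sb, hsb⟩ := hP db hdb
    -- `Pb` is the image of a projective, hence injective object of `A`
    obtain ⟨X₀, rfl⟩ : ∃ X₀, Xb = (fproj F).obj X₀ := ⟨Xb.obj, rfl⟩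
    obtain ⟨Q, q, hQ, hq⟩ := hE.enoughProj X₀
    obtain ⟨K, k, hck⟩ := hq
    have hdefl : E''.IsDeflation ((fproj F).map q) :=
      ⟨(fproj F).obj K, (fproj F).map k, (hiff _ _).mpr ⟨K, Q, X₀, k, q, hck,
        Iso.refl _, Iso.refl _, Iso.refl _, by simp, by simp⟩⟩
    obtain ⟨sb', hsb'⟩ := hP ((fproj F).map q) hdefl
    have hQinj : E.Inj Q := (hE.proj_iff_inj Q).mp hQ
    exact E''.inj_of_retract (ef_inj_of_inj hF hE E'' hiff hQinj) sb' ((fproj F).map q) hsb'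
  · intro hI
    obtain ⟨X₀, rfl⟩ : ∃ X₀, Xb = (fproj F).obj X₀ := ⟨Xb.obj, rfl⟩
    obtain ⟨I, i, hI₀, hi⟩ := hE.enoughInj X₀
    obtain ⟨C, c, hcc⟩ := hi
    have hinfl : E''.IsInflation ((fproj F).map i) :=
      ⟨(fproj F).obj C, (fproj F).map c, (hiff _ _).mpr ⟨X₀, I, C, i, c, hcc,
        Iso.refl _, Iso.refl _, Iso.refl _, by simp, by simp⟩⟩
    obtain ⟨rb, hrb⟩ := hI ((fproj F).map i) hinfl
    have hIproj : E.Proj I := (hE.proj_iff_inj I).mpr hI₀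
    exact E''.proj_of_retract (ef_proj_of_proj hF E'' hiff hIproj) ((fproj F).map i) rb hrb

end EFFrobenius

end Paper
namespace Paper

open CategoryTheory Limits

/-- **Theorem 1 (Theorem 3.1).** Let `(A, E)` be a Frobenius category and `F` a full
additive subcategory of the projective objects satisfying conditions (1) and (2).
Then the pair `(A/[F], E_F)` is a Frobenius category. -/
theorem factor_category_isFrobenius
    {A : Type u} [Category.{v} A] [Preadditive A] [HasZeroObject A] [HasBinaryBiproducts A]
    (E : ExactStructure A) (hE : E.IsFrobenius) (F : Set A) (hF : FactorHyp E F) :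
    ∃ E' : ExactStructure (FObj A F),
      (∀ ⦃X Y Z : FObj A F⦄ (i : X ⟶ Y) (d : Y ⟶ Z),
        E'.IsConflation i d ↔ MemEF E F i d) ∧
      E'.IsFrobenius := by
  refine ⟨{
    IsConflation := fun {X Y Z} i d => MemEF E F i d
    ker_of_conflation := fun {X Y Z} {i d} hm => ef_ker hF hm
    coker_of_conflation := fun {X Y Z} {i d} hm => ef_coker hF hE hm
    iso_closed := fun {X Y Z X' Y' Z'} {i d i' d'} eX eY eZ h1 h2 hm =>
      ef_iso_closed eX eY eZ h1 h2 hm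
    ex0 := fun {Z} hZ => ef_ex0 hZ
    ex1 := fun {Y Z W} {d e} hd he => ef_ex1 hF hd he
    ex1op := fun {X Y W} {i j} hi hj => ef_ex1op hF hE hi hj
    ex2 := fun {Y Z Z'} d f hd => ef_ex2 hF d f hd
    ex2op := fun {X Y X'} i f hi => ef_ex2op hF hE i f hi
  }, fun X Y Z i d => Iff.rfl, ?_⟩
  exact ef_frobenius hF hE _ (fun X Y Z i d => Iff.rfl)

end Paper
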